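/- Let Z, Z₋, Z₊ and W be real-valued random variables with finite first moments such that Z₋ is stochastically dominated by Z and Z is stochastically dominated by Z₊ (that is, P(Z₋ > t) ≤ P(Z > t) ≤ P(Z₊ > t) for all real t). Then d_W(Z, W) ≤ d_W(Z₋, W) + d_W(Z₊, W). -/

import Mathlib

open MeasureTheory Set
open scoped ENNReal

section Aux

variable {Ω : Type*} [MeasurableSpace Ω]

/-- The survival function `t ↦ (μ {ω | t ≤ X ω}).toReal` is antitone. -/
lemma survival_antitone (μ : Measure Ω) [IsProbabilityMeasure μ] (X : Ω → ℝ) :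
    Antitone (fun t : ℝ => (μ {ω | t ≤ X ω}).toReal) := by
  intro s t hst
  exact ENNReal.toReal_mono (measure_ne_top _ _)
    (measure_mono (fun ω hω => le_trans hst hω))

lemma survival_measurable (μ : Measure Ω) [IsProbabilityMeasure μ] (X : Ω → ℝ) :
    Measurable (fun t : ℝ => (μ {ω | t ≤ X ω}).toReal) :=
  (survival_antitone μ X).measurable

/-- Tail lintegral finiteness for the `≤` tails on `Ioi 0`. -/
lemma tail_lintegral_lt_top (μ : Measure Ω) [IsProbabilityMeasure μ] {X : Ω → ℝ}
    (hX : Integrable X μ) :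
    (∫⁻ t in Ioi (0:ℝ), μ {ω | t ≤ X ω}) < ∞ := by
  have hmax : Integrable (fun ω => max (X ω) 0) μ := hX.pos_part
  have key := lintegral_eq_lintegral_meas_le μ
    (Filter.Eventually.of_forall fun ω => le_max_right (X ω) 0) hmax.aemeasurable
  have hcongr : ∫⁻ t in Ioi (0:ℝ), μ {ω | t ≤ X ω}
      = ∫⁻ t in Ioi (0:ℝ), μ {ω | t ≤ max (X ω) 0} := by
    apply setLIntegral_congr_fun measurableSet_Ioi
    refine (fun t ht => ?_)
    show μ _ = μ _
    congr 1
    ext ω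
    simp only [mem_setOf_eq, le_max_iff]
    exact ⟨fun h => Or.inl h, fun h => h.elim id (fun h0 => absurd (lt_of_lt_of_le ht h0)
      (lt_irrefl 0))⟩
  rw [hcongr, ← key]
  exact hmax.lintegral_lt_top

/-- Integrability of the survival function on `Ici 0`. -/
lemma survival_integrableOn_Ici (μ : Measure Ω) [IsProbabilityMeasure μ] {X : Ω → ℝ}
    (hX : Integrable X μ) :
    IntegrableOn (fun t : ℝ => (μ {ω | t ≤ X ω}).toReal) (Ici 0) volume := by
  rw [integrableOn_Ici_iff_integrableOn_Ioi]
  constructor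
  · exact (survival_measurable μ X).aestronglyMeasurable.restrict
  · rw [hasFiniteIntegral_iff_ofReal
      (Filter.Eventually.of_forall fun t => ENNReal.toReal_nonneg)]
    have : ∀ t : ℝ, ENNReal.ofReal ((μ {ω | t ≤ X ω}).toReal) = μ {ω | t ≤ X ω} :=
      fun t => ENNReal.ofReal_toReal (measure_ne_top _ _)
    simp_rw [this]
    exact tail_lintegral_lt_top μ hX

/-- Integrability of the lower tail `t ↦ (μ {ω | X ω < t}).toReal` on `Iio 0`. -/
lemma lowertail_integrableOn_Iio (μ : Measure Ω) [IsProbabilityMeasure μ] {X : Ω → ℝ}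
    (hX : Integrable X μ) :
    IntegrableOn (fun t : ℝ => (μ {ω | X ω < t}).toReal) (Iio 0) volume := by
  have hneg : Integrable (fun ω => -X ω) μ := hX.neg
  have h1 : IntegrableOn (fun s : ℝ => (μ {ω | s ≤ -X ω}).toReal) (Ioi 0) volume :=
    (survival_integrableOn_Ici μ hneg).mono_set Ioi_subset_Ici_self
  have hanti : Antitone (fun s : ℝ => (μ {ω | X ω < -s}).toReal) := by
    intro s s' hss'
    refine ENNReal.toReal_mono (measure_ne_top _ _) (measure_mono (fun ω hω => ?_))
    simp only [mem_setOf_eq] at *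
    linarith
  have h2 : IntegrableOn (fun s : ℝ => (μ {ω | X ω < -s}).toReal) (Ioi 0) volume := by
    apply Integrable.mono' h1 hanti.measurable.aestronglyMeasurable.restrict
    refine Filter.Eventually.of_forall (fun s => ?_)
    rw [Real.norm_eq_abs, abs_of_nonneg ENNReal.toReal_nonneg]
    refine ENNReal.toReal_mono (measure_ne_top _ _) (measure_mono (fun ω hω => ?_))
    simp only [mem_setOf_eq] at *
    linarith
  have key := (Measure.measurePreserving_neg (volume : Measure ℝ)).integrableOn_comp_preimage
    (Homeomorph.neg ℝ).measurableEmbedding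
    (f := fun t : ℝ => (μ {ω | X ω < t}).toReal) (s := Iio (0:ℝ))
  have hpre : (Neg.neg ⁻¹' (Iio (0:ℝ))) = Ioi (0:ℝ) := by
    ext x; simp
  refine key.mp ?_
  rw [hpre]
  exact h2

/-- Survival functions add up with lower tails to 1. -/
lemma survival_add_lowertail (μ : Measure Ω) [IsProbabilityMeasure μ] {X : Ω → ℝ}
    (hX : Integrable X μ) (t : ℝ) :
    (μ {ω | t ≤ X ω}).toReal + (μ {ω | X ω < t}).toReal = 1 := by
  have hns : NullMeasurableSet {ω | t ≤ X ω} μ := by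
    have : {ω | t ≤ X ω} = X ⁻¹' (Ici t) := rfl
    rw [this]
    exact hX.aemeasurable.nullMeasurable measurableSet_Ici
  have hcompl : {ω | X ω < t} = {ω | t ≤ X ω}ᶜ := by
    ext ω; simp [not_le]
  have := measure_add_measure_compl₀ (μ := μ) hns
  rw [hcompl]
  have h1 : μ {ω | t ≤ X ω} ≠ ∞ := measure_ne_top _ _
  have h2 : μ {ω | t ≤ X ω}ᶜ ≠ ∞ := measure_ne_top _ _
  rw [← ENNReal.toReal_add h1 h2, this, measure_univ]
  rfl

end Aux

section Aux2

variable {Ω₁ Ω₂ : Type*} [MeasurableSpace Ω₁] [MeasurableSpace Ω₂]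

/-- Integrability of the difference of two survival functions. -/
lemma integrable_survival_diff (μ : Measure Ω₁) (ν : Measure Ω₂)
    [IsProbabilityMeasure μ] [IsProbabilityMeasure ν] {X : Ω₁ → ℝ} {Y : Ω₂ → ℝ}
    (hX : Integrable X μ) (hY : Integrable Y ν) :
    Integrable (fun t : ℝ =>
      (μ {ω | t ≤ X ω}).toReal - (ν {ω | t ≤ Y ω}).toReal) volume := by
  set F : ℝ → ℝ := fun t => (μ {ω | t ≤ X ω}).toReal with hF
  set G : ℝ → ℝ := fun t => (ν {ω | t ≤ Y ω}).toReal with hG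
  set F' : ℝ → ℝ := fun t => (μ {ω | X ω < t}).toReal with hF'
  set G' : ℝ → ℝ := fun t => (ν {ω | Y ω < t}).toReal with hG'
  have hIci : IntegrableOn (fun t : ℝ => F t + G t) (Ici 0) volume := by
    exact (survival_integrableOn_Ici μ hX).add (survival_integrableOn_Ici ν hY)
  have hIio : IntegrableOn (fun t : ℝ => F' t + G' t) (Iio 0) volume := by
    exact (lowertail_integrableOn_Iio μ hX).add (lowertail_integrableOn_Iio ν hY)
  have hbound_int : Integrable
      ((Ici (0:ℝ)).indicator (fun t => F t + G t)
        + (Iio (0:ℝ)).indicator (fun t => F' t + G' t)) volume :=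
    (hIci.integrable_indicator measurableSet_Ici).add
      (hIio.integrable_indicator measurableSet_Iio)
  apply Integrable.mono' hbound_int
  · exact ((survival_measurable μ X).sub (survival_measurable ν Y)).aestronglyMeasurable
  · refine Filter.Eventually.of_forall (fun t => ?_)
    rcases le_or_gt 0 t with ht | ht
    · have h1 : (Ici (0:ℝ)).indicator (fun t => F t + G t) t = F t + G t :=
        indicator_of_mem (by simpa using ht) _
      have h2 : (Iio (0:ℝ)).indicator (fun t => F' t + G' t) t = 0 :=
        indicator_of_notMem (by simpa using ht) _
      simp only [Pi.add_apply, h1, h2, add_zero, Real.norm_eq_abs]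
      have hFn : 0 ≤ F t := ENNReal.toReal_nonneg
      have hGn : 0 ≤ G t := ENNReal.toReal_nonneg
      calc |F t - G t| ≤ |F t| + |G t| := abs_sub _ _
        _ = F t + G t := by rw [abs_of_nonneg hFn, abs_of_nonneg hGn]
    · have h1 : (Ici (0:ℝ)).indicator (fun t => F t + G t) t = 0 :=
        indicator_of_notMem (by simpa using ht) _
      have h2 : (Iio (0:ℝ)).indicator (fun t => F' t + G' t) t = F' t + G' t :=
        indicator_of_mem (by simpa using ht) _
      simp only [Pi.add_apply, h1, h2, zero_add, Real.norm_eq_abs]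
      have e1 : F t + F' t = 1 := survival_add_lowertail μ hX t
      have e2 : G t + G' t = 1 := survival_add_lowertail ν hY t
      have hFn : 0 ≤ F' t := ENNReal.toReal_nonneg
      have hGn : 0 ≤ G' t := ENNReal.toReal_nonneg
      have : F t - G t = G' t - F' t := by linarith
      rw [this]
      calc |G' t - F' t| ≤ |G' t| + |F' t| := abs_sub _ _
        _ = F' t + G' t := by rw [abs_of_nonneg hFn, abs_of_nonneg hGn]; ring

/-- Strict stochastic domination implies domination for closed tails. -/
lemma dom_le (μ : Measure Ω₁) (ν : Measure Ω₂)
    [IsProbabilityMeasure μ] [IsProbabilityMeasure ν] {X : Ω₁ → ℝ} {Y : Ω₂ → ℝ}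
    (hY : AEMeasurable Y ν)
    (hdom : ∀ t : ℝ, μ {ω | t < X ω} ≤ ν {ω | t < Y ω}) (t : ℝ) :
    μ {ω | t ≤ X ω} ≤ ν {ω | t ≤ Y ω} := by
  have hseq : {ω | t ≤ Y ω} = ⋂ n : ℕ, {ω | t - 1/(n+1) < Y ω} := by
    ext ω
    simp only [mem_iInter, mem_setOf_eq]
    constructor
    · intro h n
      have : (0:ℝ) < 1/(n+1) := by positivity
      linarith
    · intro h
      by_contra hlt
      push_neg at hlt
      obtain ⟨n, hn⟩ := exists_nat_one_div_lt (sub_pos.2 hlt)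
      have := h n
      have : (1:ℝ)/(n+1) < t - Y ω := hn
      linarith [h n]
  rw [hseq, Antitone.measure_iInter]
  · refine le_iInf (fun n => ?_)
    refine le_trans (le_trans (measure_mono ?_) (hdom (t - 1/(n+1)))) le_rfl
    intro ω hω
    simp only [mem_setOf_eq] at *
    have : (0:ℝ) < 1/(n+1) := by positivity
    linarith
  · intro n m hnm ω hω
    simp only [mem_setOf_eq] at *
    have h1 : (1:ℝ)/(m+1) ≤ 1/(n+1) := by
      apply one_div_le_one_div_of_le
      · positivity
      · exact_mod_cast by exact_mod_cast add_le_add_left (Nat.cast_le.2 hnm) 1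
    linarith
  · intro n
    have : {ω | t - 1/(n+1 : ℝ) < Y ω} = Y ⁻¹' (Ioi (t - 1/(n+1))) := rfl
    rw [this]
    exact hY.nullMeasurable measurableSet_Ioi
  · exact ⟨0, measure_ne_top _ _⟩

end Aux2

/-- Sandwich Lemma for Wasserstein distance (Lemma 2.4): if `Z₋ ≼_d Z ≼_d Z₊` (stochastic
domination), then `d_W(Z, W) ≤ d_W(Z₋, W) + d_W(Z₊, W)`, where
`d_W(X, Y) = ∫_ℝ |P(X ≥ t) − P(Y ≥ t)| dt`. The random variables need not be defined on a
common probability space. -/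
theorem wasserstein_sandwich_lemma
    {Ω₁ Ω₂ Ω₃ Ω₄ : Type*}
    [MeasurableSpace Ω₁] [MeasurableSpace Ω₂] [MeasurableSpace Ω₃] [MeasurableSpace Ω₄]
    (μ₁ : Measure Ω₁) (μ₂ : Measure Ω₂) (μ₃ : Measure Ω₃) (μ₄ : Measure Ω₄)
    [IsProbabilityMeasure μ₁] [IsProbabilityMeasure μ₂] [IsProbabilityMeasure μ₃]
    [IsProbabilityMeasure μ₄]
    (Z : Ω₁ → ℝ) (Zm : Ω₂ → ℝ) (Zp : Ω₃ → ℝ) (W : Ω₄ → ℝ)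
    (hZ : Integrable Z μ₁) (hZm : Integrable Zm μ₂) (hZp : Integrable Zp μ₃)
    (hW : Integrable W μ₄)
    (hdom₁ : ∀ t : ℝ, μ₂ {ω | t < Zm ω} ≤ μ₁ {ω | t < Z ω})
    (hdom₂ : ∀ t : ℝ, μ₁ {ω | t < Z ω} ≤ μ₃ {ω | t < Zp ω}) :
    ∫ t : ℝ, |(μ₁ {ω | t ≤ Z ω}).toReal - (μ₄ {ω | t ≤ W ω}).toReal| ≤
      (∫ t : ℝ, |(μ₂ {ω | t ≤ Zm ω}).toReal - (μ₄ {ω | t ≤ W ω}).toReal|) +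
      ∫ t : ℝ, |(μ₃ {ω | t ≤ Zp ω}).toReal - (μ₄ {ω | t ≤ W ω}).toReal| := by
  have hle1 : ∀ t : ℝ, (μ₂ {ω | t ≤ Zm ω}).toReal ≤ (μ₁ {ω | t ≤ Z ω}).toReal := fun t =>
    ENNReal.toReal_mono (measure_ne_top _ _) (dom_le μ₂ μ₁ hZ.aemeasurable hdom₁ t)
  have hle2 : ∀ t : ℝ, (μ₁ {ω | t ≤ Z ω}).toReal ≤ (μ₃ {ω | t ≤ Zp ω}).toReal := fun t =>
    ENNReal.toReal_mono (measure_ne_top _ _) (dom_le μ₁ μ₃ hZp.aemeasurable hdom₂ t)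
  have hib : Integrable (fun t : ℝ =>
      (μ₁ {ω | t ≤ Z ω}).toReal - (μ₄ {ω | t ≤ W ω}).toReal) volume :=
    integrable_survival_diff μ₁ μ₄ hZ hW
  have hia : Integrable (fun t : ℝ =>
      (μ₂ {ω | t ≤ Zm ω}).toReal - (μ₄ {ω | t ≤ W ω}).toReal) volume :=
    integrable_survival_diff μ₂ μ₄ hZm hW
  have hic : Integrable (fun t : ℝ =>
      (μ₃ {ω | t ≤ Zp ω}).toReal - (μ₄ {ω | t ≤ W ω}).toReal) volume :=
    integrable_survival_diff μ₃ μ₄ hZp hW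
  have hpt : ∀ t : ℝ,
      |(μ₁ {ω | t ≤ Z ω}).toReal - (μ₄ {ω | t ≤ W ω}).toReal| ≤
      |(μ₂ {ω | t ≤ Zm ω}).toReal - (μ₄ {ω | t ≤ W ω}).toReal| +
      |(μ₃ {ω | t ≤ Zp ω}).toReal - (μ₄ {ω | t ≤ W ω}).toReal| := by
    intro t
    have h1 := hle1 t
    have h2 := hle2 t
    have ha := le_abs_self ((μ₃ {ω | t ≤ Zp ω}).toReal - (μ₄ {ω | t ≤ W ω}).toReal)
    have hb := neg_abs_le ((μ₂ {ω | t ≤ Zm ω}).toReal - (μ₄ {ω | t ≤ W ω}).toReal)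
    have hc := abs_nonneg ((μ₂ {ω | t ≤ Zm ω}).toReal - (μ₄ {ω | t ≤ W ω}).toReal)
    have hd := abs_nonneg ((μ₃ {ω | t ≤ Zp ω}).toReal - (μ₄ {ω | t ≤ W ω}).toReal)
    rw [abs_le]
    constructor <;> linarith
  calc ∫ t : ℝ, |(μ₁ {ω | t ≤ Z ω}).toReal - (μ₄ {ω | t ≤ W ω}).toReal|
      ≤ ∫ t : ℝ, (|(μ₂ {ω | t ≤ Zm ω}).toReal - (μ₄ {ω | t ≤ W ω}).toReal| +
        |(μ₃ {ω | t ≤ Zp ω}).toReal - (μ₄ {ω | t ≤ W ω}).toReal|) :=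
        integral_mono hib.abs (hia.abs.add hic.abs) hpt
    _ = (∫ t : ℝ, |(μ₂ {ω | t ≤ Zm ω}).toReal - (μ₄ {ω | t ≤ W ω}).toReal|) +
        ∫ t : ℝ, |(μ₃ {ω | t ≤ Zp ω}).toReal - (μ₄ {ω | t ≤ W ω}).toReal| :=
        integral_add hia.abs hic.abs
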